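/- If X = X₁ × X₂ × X₃ is such a product and the dynamics have the cherry structure ẋ₁ = f₁(x₁), ẋ₂ = f₂(x₁,x₂), ẋ₃ = f₃(x₁,x₃), then the maximum positively invariant set M₊ of the full system in X equals {(x₁,x₂,x₃) ∈ X : (x₁,x₂) ∈ M₊², (x₁,x₃) ∈ M₊³}, where M₊² and M₊³ are the MPI sets of the subsystems (x₁,x₂) in X₁×X₂ and (x₁,x₃) in X₁×X₃ respectively. -/
import Mathlib


/-- for the cherry-structured system `ẋ₁=f₁(x₁), ẋ₂=f₂(x₁,x₂), ẋ₃=f₃(x₁,x₃)`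
with product constraint set `X = X₁ × X₂ × X₃`, the MPI set of the full system equals
`{(x₁,x₂,x₃) ∈ X : (x₁,x₂) ∈ M₊², (x₁,x₃) ∈ M₊³}` where `M₊²`, `M₊³` are the MPI sets of
the subsystems (whose flows commute with the projections). -/
theorem cherry_MPI_decomposition (n₁ n₂ n₃ : ℕ)
    (X₁ : Set (Fin n₁ → ℝ)) (X₂ : Set (Fin n₂ → ℝ)) (X₃ : Set (Fin n₃ → ℝ))
    (φ : ℝ → ((Fin n₁ → ℝ) × (Fin n₂ → ℝ) × (Fin n₃ → ℝ)) →
        ((Fin n₁ → ℝ) × (Fin n₂ → ℝ) × (Fin n₃ → ℝ)))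
    (φ₂ : ℝ → ((Fin n₁ → ℝ) × (Fin n₂ → ℝ)) → ((Fin n₁ → ℝ) × (Fin n₂ → ℝ)))
    (φ₃ : ℝ → ((Fin n₁ → ℝ) × (Fin n₃ → ℝ)) → ((Fin n₁ → ℝ) × (Fin n₃ → ℝ)))
    (hφ0 : ∀ x, φ 0 x = x)
    (hcomm₂ : ∀ t ≥ (0 : ℝ), ∀ x, φ₂ t (x.1, x.2.1) = ((φ t x).1, (φ t x).2.1))
    (hcomm₃ : ∀ t ≥ (0 : ℝ), ∀ x, φ₃ t (x.1, x.2.2) = ((φ t x).1, (φ t x).2.2)) :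
    {x | ∀ t ≥ (0 : ℝ), φ t x ∈ X₁ ×ˢ (X₂ ×ˢ X₃)} =
    {x ∈ X₁ ×ˢ (X₂ ×ˢ X₃) |
      (x.1, x.2.1) ∈ {y | ∀ t ≥ (0 : ℝ), φ₂ t y ∈ X₁ ×ˢ X₂} ∧
      (x.1, x.2.2) ∈ {y | ∀ t ≥ (0 : ℝ), φ₃ t y ∈ X₁ ×ˢ X₃}} := by
  ext x
  simp only [Set.mem_setOf_eq, Set.mem_sep_iff, Set.mem_prod]
  constructor
  · intro h
    refine ⟨by simpa [hφ0] using h 0 le_rfl, fun t ht => ?_, fun t ht => ?_⟩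
    · rw [hcomm₂ t ht x]; exact ⟨(h t ht).1, (h t ht).2.1⟩
    · rw [hcomm₃ t ht x]; exact ⟨(h t ht).1, (h t ht).2.2⟩
  · rintro ⟨hx, h2, h3⟩ t ht
    have a2 := h2 t ht; rw [hcomm₂ t ht x] at a2
    have a3 := h3 t ht; rw [hcomm₃ t ht x] at a3
    exact ⟨a2.1, a2.2, a3.2⟩
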